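/- Let f be an entire function of exponential type, i.e. there exist constants C, K > 0 with |D^n f(0)| ≤ C·K^n for all n ∈ ℕ. Then there exists a neighborhood A of 0 in ℂ (one may take A = {x : e·K·|x|·exp(K|x|) ≤ 1}) such that for all x ∈ A and all λ ∈ ℂ: f(λx) = f(0) + λ · Σ_{p=1}^{∞} (λ - p)^{p-1} · (x^p/p!) · D^p f(px), the series being absolutely convergent. -/

import Mathlib

open scoped Nat
open Finset fwdDiff

lemma fdZero : ∀ (j : ℕ) (n : ℕ), j < n → ∀ g : ℂ,
    (Δ_[(1:ℕ)])^[n] (fun k : ℕ => ((k : ℂ) + g)^j) = 0 := by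
  intro j
  induction j using Nat.strong_induction_on with
  | _ j IH =>
    intro n hn g
    obtain ⟨m, rfl⟩ : ∃ m, n = m + 1 := ⟨n - 1, by omega⟩
    rw [Function.iterate_succ_apply]
    have hΔ : Δ_[(1:ℕ)] (fun k : ℕ => ((k : ℂ) + g)^j)
        = ∑ i ∈ range j, (j.choose i : ℂ) • fun k : ℕ => ((k : ℂ) + g)^i := by
      funext k
      have hb := add_pow ((k : ℂ) + g) 1 j
      simp only [one_pow, mul_one] at hb
      simp only [fwdDiff, Finset.sum_apply, Pi.smul_apply, smul_eq_mul]
      push_cast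
      rw [show ((k : ℂ) + 1 + g) = ((k:ℂ) + g) + 1 by ring, hb, Finset.sum_range_succ]
      simp [mul_comm]
    rw [hΔ, fwdDiff_iter_finset_sum]
    refine Finset.sum_eq_zero fun i hi => ?_
    have hi' := Finset.mem_range.mp hi
    rw [fwdDiff_iter_const_smul, IH i hi' m (by omega) g, smul_zero]

lemma altSum (n j : ℕ) (h : j < n) (g : ℂ) :
    ∑ q ∈ range (n+1), (-1:ℂ)^q * (n.choose q : ℂ) * ((q:ℂ) + g)^j = 0 := by
  have h0 := fwdDiff_iter_eq_sum_shift (1:ℕ) (fun k : ℕ => ((k : ℂ) + g)^j) n 0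
  rw [fdZero j n h g] at h0
  simp only [Pi.zero_apply, zero_add, smul_eq_mul, zsmul_eq_mul] at h0
  have h1 : ∑ q ∈ range (n+1), ((-1:ℂ)^(n-q) * (n.choose q : ℂ)) * ((q:ℂ) + g)^j = 0 := by
    rw [← h0.symm] at *
    rw [← h0]
    refine Finset.sum_congr rfl fun q hq => ?_
    push_cast
    simp [smul_eq_mul]
  have h2 : ∀ q ∈ range (n+1), (-1:ℂ)^q * (n.choose q : ℂ) * ((q:ℂ) + g)^j
      = (-1:ℂ)^n * (((-1:ℂ)^(n-q) * (n.choose q : ℂ)) * ((q:ℂ) + g)^j) := by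
    intro q hq
    have hqn : q ≤ n := by simpa using Nat.lt_succ_iff.mp (Finset.mem_range.mp hq)
    have key : (-1:ℂ)^q = (-1:ℂ)^n * (-1:ℂ)^(n-q) := by
      rw [← pow_add, show n + (n-q) = 2*(n-q)+q by omega, pow_add, pow_mul]
      norm_num
    rw [key]; ring
  rw [Finset.sum_congr rfl h2, ← Finset.mul_sum, h1, mul_zero]

lemma chooseId (n k : ℕ) (hk : 1 ≤ k) (h : k ≤ n) :
    (n+1).choose k * (n+1-k) = (n+1) * n.choose k := by
  have h1 : (n+1).choose k = (n+1).choose (n+1-k) := by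
    rw [Nat.choose_symm (by omega)]
  rw [h1, show n+1-k = (n-k)+1 by omega, ← Nat.add_one_mul_choose_eq, Nat.choose_symm h]

open Polynomial in
lemma abelPoly (n : ℕ) : ∀ (lam y : ℂ),
    y^n + ∑ q ∈ range n, (n.choose (q+1) : ℂ) * lam * (lam - ((q:ℂ)+1))^q
        * (y + ((q:ℂ)+1))^(n-(q+1))
      = (lam + y)^n := by
  induction n with
  | zero => intro lam y; simp
  | succ n IH =>
    intro lam y
    set P : Polynomial ℂ :=
      X^(n+1)
        + ∑ q ∈ range (n+1), C (((n+1).choose (q+1) : ℂ) * lam * (lam - ((q:ℂ)+1))^q)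
            * (X + C ((q:ℂ)+1))^(n+1-(q+1))
        - (C lam + X)^(n+1) with hPdef
    have hQ : (X^n
        + ∑ q ∈ range n, C ((n.choose (q+1) : ℂ) * lam * (lam - ((q:ℂ)+1))^q)
            * (X + C ((q:ℂ)+1))^(n-(q+1))
        - (C lam + X)^n : Polynomial ℂ) = 0 := by
      apply Polynomial.funext
      intro z
      simp only [eval_sub, eval_add, eval_pow, eval_finset_sum, eval_mul, eval_C, eval_X,
        eval_zero]
      rw [sub_eq_zero]
      exact IH lam z
    have hderiv : Polynomial.derivative P = 0 := by
      have e1 : Polynomial.derivative P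
          = C (((n:ℂ))+1) * X^n
            + ∑ q ∈ range (n+1), C (((n+1).choose (q+1) : ℂ) * lam * (lam - ((q:ℂ)+1))^q)
                * (C (((n+1-(q+1) : ℕ)) : ℂ) * (X + C ((q:ℂ)+1))^(n+1-(q+1)-1))
            - C (((n:ℂ))+1) * (C lam + X)^n := by
        rw [hPdef]
        rw [Polynomial.derivative_sub, Polynomial.derivative_add, Polynomial.derivative_sum]
        congr 1
        · congr 1
          · rw [Polynomial.derivative_X_pow]; push_cast; ring_nf
          · refine Finset.sum_congr rfl fun q hq => ?_
            rw [Polynomial.derivative_C_mul, Polynomial.derivative_pow]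
            simp [mul_comm, mul_assoc, mul_left_comm]
        · rw [Polynomial.derivative_pow]
          simp only [Polynomial.derivative_add, Polynomial.derivative_C,
            Polynomial.derivative_X, zero_add, mul_one]
          push_cast
          ring
      have e2 : ∑ q ∈ range (n+1), C (((n+1).choose (q+1) : ℂ) * lam * (lam - ((q:ℂ)+1))^q)
                * (C (((n+1-(q+1) : ℕ)) : ℂ) * (X + C ((q:ℂ)+1))^(n+1-(q+1)-1))
          = C (((n:ℂ))+1) * ∑ q ∈ range n, C ((n.choose (q+1) : ℂ) * lam * (lam - ((q:ℂ)+1))^q)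
                * (X + C ((q:ℂ)+1))^(n-(q+1)) := by
        rw [Finset.sum_range_succ, Finset.mul_sum]
        have hz : C (((n+1-(n+1) : ℕ)) : ℂ) = (0 : Polynomial ℂ) := by norm_num
        rw [hz]
        rw [mul_comm (0 : Polynomial ℂ), mul_zero, mul_zero, add_zero]
        refine Finset.sum_congr rfl fun q hq => ?_
        have hq' : q < n := Finset.mem_range.mp hq
        have hcast : (((n+1).choose (q+1) : ℂ)) * (((n+1-(q+1) : ℕ)) : ℂ)
            = ((n:ℂ)+1) * ((n.choose (q+1) : ℂ)) := by
          exact_mod_cast chooseId n (q+1) (by omega) (by omega)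
        rw [show n+1-(q+1)-1 = n-(q+1) by omega, ← mul_assoc, ← Polynomial.C_mul,
          ← mul_assoc, ← Polynomial.C_mul]
        congr 1
        rw [Polynomial.C_inj]
        linear_combination (lam * (lam - ((q:ℂ)+1))^q) * hcast
      rw [e1, e2]
      have : C (((n:ℂ))+1) * X^n
            + C (((n:ℂ))+1) * (∑ q ∈ range n, C ((n.choose (q+1) : ℂ) * lam * (lam - ((q:ℂ)+1))^q)
                * (X + C ((q:ℂ)+1))^(n-(q+1)))
            - C (((n:ℂ))+1) * (C lam + X)^n
          = C (((n:ℂ))+1) * (X^n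
            + ∑ q ∈ range n, C ((n.choose (q+1) : ℂ) * lam * (lam - ((q:ℂ)+1))^q)
                * (X + C ((q:ℂ)+1))^(n-(q+1))
            - (C lam + X)^n) := by ring
      rw [this, hQ, mul_zero]
    -- P is constant
    have hconst : P = C (P.coeff 0) := Polynomial.eq_C_of_derivative_eq_zero hderiv
    have heval : ∀ z : ℂ, P.eval z = P.coeff 0 := by
      intro z; conv_lhs => rw [hconst]
      simp
    -- eval at -lam is 0
    have hP0 : P.eval (-lam) = 0 := by
      have hAlt := altSum (n+1) n (by omega) (-lam)
      rw [Finset.sum_range_succ'] at hAlt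
      push_cast at hAlt
      simp only [Nat.choose_zero_right, Nat.cast_one, pow_zero, one_mul, zero_add,
        Nat.cast_ofNat] at hAlt
      simp only [hPdef, eval_sub, eval_add, eval_pow, eval_finset_sum, eval_mul, eval_C, eval_X]
      have hsum : ∑ q ∈ range (n+1), (((n+1).choose (q+1) : ℂ)) * lam * (lam - ((q:ℂ)+1))^q
            * (-lam + ((q:ℂ)+1))^(n+1-(q+1))
          = -lam * ∑ q ∈ range (n+1),
              ((-1:ℂ)^(q+1) * (((n+1).choose (q+1) : ℂ)) * (((q:ℂ)+1) + -lam)^n) := by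
        rw [Finset.mul_sum]
        refine Finset.sum_congr rfl fun q hq => ?_
        have hq' := Finset.mem_range.mp hq
        have h1 : (lam - ((q:ℂ)+1))^q = (-1:ℂ)^q * ((((q:ℂ)+1) + -lam))^q := by
          rw [show lam - ((q:ℂ)+1) = -((((q:ℂ)+1)) + -lam) by ring, neg_pow]
        have h2 : ((((q:ℂ)+1)) + -lam)^q * ((-lam + ((q:ℂ)+1)))^(n+1-(q+1))
            = ((((q:ℂ)+1)) + -lam)^n := by
          rw [show (-lam + ((q:ℂ)+1)) = ((((q:ℂ)+1)) + -lam) by ring, ← pow_add]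
          congr 1; omega
        rw [h1]
        linear_combination ((((n+1).choose (q+1) : ℂ)) * lam * (-1:ℂ)^q) * h2
      rw [hsum]
      linear_combination (-lam) * hAlt
    have hPy : P.eval y = 0 := by rw [heval y, ← heval (-lam), hP0]
    simp only [hPdef, eval_sub, eval_add, eval_pow, eval_finset_sum, eval_mul, eval_C,
      eval_X] at hPy
    rw [sub_eq_zero] at hPy
    exact hPy

lemma iterDerivComp (f : ℂ → ℂ) (q n : ℕ) :
    iteratedDeriv n (iteratedDeriv q f) = iteratedDeriv (n+q) f := by
  simp only [iteratedDeriv_eq_iterate, Function.iterate_add_apply]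

lemma derivDiff {g : ℂ → ℂ} (hg : Differentiable ℂ g) : Differentiable ℂ (deriv g) := by
  intro z
  exact ((hg.differentiableOn.analyticOnNhd isOpen_univ).deriv z (Set.mem_univ z)).differentiableAt

lemma iterDiff {f : ℂ → ℂ} (hf : Differentiable ℂ f) (q : ℕ) :
    Differentiable ℂ (iteratedDeriv q f) := by
  induction q with
  | zero => simpa [iteratedDeriv_zero] using hf
  | succ n IH => rw [iteratedDeriv_succ]; exact derivDiff IH

lemma taylorShift {f : ℂ → ℂ} (hf : Differentiable ℂ f) (q : ℕ) (w : ℂ) :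
    HasSum (fun n : ℕ => ((n ! : ℂ))⁻¹ * w^n * iteratedDeriv (n+q) f 0)
      (iteratedDeriv q f w) := by
  have h := Complex.hasSum_taylorSeries_of_entire (iterDiff hf q) 0 w
  simp only [sub_zero, smul_eq_mul, iterDerivComp] at h
  convert h using 2 with n
  · rfl
  ring

lemma expHasSum (t : ℝ) : HasSum (fun n : ℕ => t^n / n !) (Real.exp t) := by
  have h := (Real.summable_pow_div_factorial t).hasSum
  rwa [show ∑' n : ℕ, t^n/(n ! : ℝ) = Real.exp t from by
    rw [Real.exp_eq_exp_ℝ, NormedSpace.exp_eq_tsum_div]] at h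

lemma factLB (n : ℕ) :
    Real.sqrt ((n:ℝ)+1) * (((n:ℝ)+1)/Real.exp 1)^(n+1) ≤ ((n+1)! : ℝ) := by
  have hpi : Real.sqrt Real.pi ≤ Stirling.stirlingSeq (n+1) := by
    refine Stirling.stirlingSeq'_antitone.le_of_tendsto ?_ n
    exact Stirling.tendsto_stirlingSeq_sqrt_pi.comp (Filter.tendsto_add_atTop_nat 1)
  have hdef : Stirling.stirlingSeq (n+1)
      = ((n+1)! : ℝ) / (Real.sqrt (2*((n:ℝ)+1)) * (((n:ℝ)+1)/Real.exp 1)^(n+1)) := by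
    simp [Stirling.stirlingSeq]
  have hden : 0 < Real.sqrt (2*((n:ℝ)+1)) * (((n:ℝ)+1)/Real.exp 1)^(n+1) := by
    positivity
  have h1 : Real.sqrt Real.pi * (Real.sqrt (2*((n:ℝ)+1)) * (((n:ℝ)+1)/Real.exp 1)^(n+1))
      ≤ ((n+1)! : ℝ) := by
    rw [hdef] at hpi
    calc Real.sqrt Real.pi * (Real.sqrt (2*((n:ℝ)+1)) * (((n:ℝ)+1)/Real.exp 1)^(n+1))
        ≤ (((n+1)! : ℝ) / (Real.sqrt (2*((n:ℝ)+1)) * (((n:ℝ)+1)/Real.exp 1)^(n+1)))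
            * (Real.sqrt (2*((n:ℝ)+1)) * (((n:ℝ)+1)/Real.exp 1)^(n+1)) := by
          exact mul_le_mul_of_nonneg_right hpi hden.le
      _ = ((n+1)! : ℝ) := by field_simp
  refine le_trans ?_ h1
  have h2 : Real.sqrt (2*((n:ℝ)+1)) = Real.sqrt 2 * Real.sqrt ((n:ℝ)+1) := by
    rw [Real.sqrt_mul (by norm_num)]
  rw [h2]
  have h3 : (1:ℝ) ≤ Real.sqrt Real.pi * Real.sqrt 2 := by
    rw [← Real.sqrt_mul Real.pi_pos.le]
    rw [show (1:ℝ) = Real.sqrt 1 from (Real.sqrt_one).symm]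
    apply Real.sqrt_le_sqrt
    nlinarith [Real.pi_gt_three]
  nlinarith [Real.sqrt_nonneg ((n:ℝ)+1), pow_pos (div_pos (by positivity : (0:ℝ) < (n:ℝ)+1) (Real.exp_pos 1)) (n+1),
    mul_pos (Real.sqrt_pos.mpr (by positivity : (0:ℝ) < (n:ℝ)+1)) (pow_pos (div_pos (by positivity : (0:ℝ) < (n:ℝ)+1) (Real.exp_pos 1)) (n+1))]

open Polynomial in
lemma abelEval (m : ℕ) (lam : ℂ) :
    ∑ q ∈ range (m+1), ((m+1).choose (q+1) : ℂ) * lam * (lam - ((q:ℂ)+1))^q * (((q:ℂ)+1))^(m-q)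
      = lam^(m+1) := by
  have h := abelPoly (m+1) lam 0
  simp only [zero_add, add_zero, Nat.succ_sub_succ] at h
  rw [zero_pow (by omega : m+1 ≠ 0), zero_add] at h
  exact h

lemma sumInvPow : Summable (fun p : ℕ => 1 / (((p:ℝ)+1) * Real.sqrt ((p:ℝ)+1))) := by
  have h : Summable (fun n : ℕ => 1 / (n:ℝ)^((3:ℝ)/2)) :=
    Real.summable_one_div_nat_rpow.mpr (by norm_num)
  have h2 := (summable_nat_add_iff 1).mpr h
  refine h2.congr fun n => ?_
  have hpos : (0:ℝ) ≤ (n:ℝ)+1 := by positivity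
  push_cast
  rw [show (3:ℝ)/2 = 1 + 1/2 by norm_num, Real.rpow_add (by positivity), Real.rpow_one,
    ← Real.sqrt_eq_rpow]

theorem stmt6 (f : ℂ → ℂ) (hf : Differentiable ℂ f) (C K : ℝ) (hC : 0 < C) (hK : 0 < K)
    (hgrowth : ∀ n : ℕ, ‖iteratedDeriv n f 0‖ ≤ C * K ^ n) :
    ∀ x : ℂ, Real.exp 1 * K * ‖x‖ * Real.exp (K * ‖x‖) ≤ 1 →
      ∀ lam : ℂ,
        Summable (fun p : ℕ =>
          ‖lam * (lam - ((p : ℂ) + 1)) ^ p * (x ^ (p + 1) / ((p + 1)! : ℂ)) *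
            iteratedDeriv (p + 1) f (((p : ℂ) + 1) * x)‖) ∧
        HasSum (fun p : ℕ =>
          lam * (lam - ((p : ℂ) + 1)) ^ p * (x ^ (p + 1) / ((p + 1)! : ℂ)) *
            iteratedDeriv (p + 1) f (((p : ℂ) + 1) * x))
          (f (lam * x) - f 0) := by
  intro x hx lam
  set T : ℕ → ℂ := fun p =>
    lam * (lam - ((p : ℂ) + 1)) ^ p * (x ^ (p + 1) / ((p + 1)! : ℂ)) *
      iteratedDeriv (p + 1) f (((p : ℂ) + 1) * x) with hT
  set F : ℕ × ℕ → ℂ := fun pn =>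
    lam * (lam - ((pn.1 : ℂ) + 1)) ^ pn.1 * (x ^ (pn.1 + 1) / ((pn.1 + 1)! : ℂ)) *
      (((pn.2 ! : ℂ))⁻¹ * ((((pn.1 : ℂ)) + 1) * x) ^ pn.2
        * iteratedDeriv (pn.2 + (pn.1 + 1)) f 0) with hF
  have h1 : ∀ p : ℕ, HasSum (fun n => F (p, n)) (T p) := by
    intro p
    exact (taylorShift hf (p+1) (((p:ℂ)+1)*x)).mul_left
      (lam * (lam - ((p : ℂ) + 1)) ^ p * (x ^ (p + 1) / ((p + 1)! : ℂ)))
  -- bounds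
  set G : ℕ → ℕ → ℝ := fun p n =>
    ‖lam‖ * (‖lam‖ + ((p:ℝ)+1))^p * (‖x‖^(p+1) / (p+1)!) *
      ((n ! : ℝ)⁻¹ * ((((p:ℝ)+1)) * ‖x‖)^n * (C * K^(n+(p+1)))) with hG
  have hFG : ∀ p n : ℕ, ‖F (p, n)‖ ≤ G p n := by
    intro p n
    have hcast : ((p : ℂ) + 1) = ((p+1 : ℕ) : ℂ) := by push_cast; ring
    have hnorm : ‖F (p, n)‖ = ‖lam‖ * ‖lam - ((p:ℂ)+1)‖^p * (‖x‖^(p+1) / (p+1)!) *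
        ((n ! : ℝ)⁻¹ * ((((p:ℝ)+1)) * ‖x‖)^n * ‖iteratedDeriv (n+(p+1)) f 0‖) := by
      simp only [hF, norm_mul, norm_pow, norm_div, norm_inv, hcast, Complex.norm_natCast]
      push_cast
      ring
    rw [hnorm]
    simp only [hG]
    gcongr
    · calc ‖lam - ((p:ℂ)+1)‖ ≤ ‖lam‖ + ‖((p:ℂ)+1)‖ := norm_sub_le _ _
        _ = ‖lam‖ + ((p:ℝ)+1) := by rw [hcast, Complex.norm_natCast]; push_cast; ring
    · exact hgrowth (n + (p+1))
  set A : ℕ → ℝ := fun p =>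
    ‖lam‖ * (‖lam‖ + ((p:ℝ)+1))^p * (‖x‖^(p+1) / (p+1)!) * (C * K^(p+1)) with hA
  have hGsum : ∀ p : ℕ, HasSum (G p) (A p * Real.exp (K * (((p:ℝ)+1) * ‖x‖))) := by
    intro p
    have h := (expHasSum (K * (((p:ℝ)+1) * ‖x‖))).mul_left (A p)
    convert h using 1
    · rfl
    funext n
    simp only [hG, hA, mul_pow, pow_add]
    field_simp
  -- the crucial p-summable bound
  set M : ℝ := C * ‖lam‖ * Real.exp ‖lam‖ with hM
  have hAbound : ∀ p : ℕ, A p * Real.exp (K * (((p:ℝ)+1) * ‖x‖))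
      ≤ M * (1 / (((p:ℝ)+1) * Real.sqrt ((p:ℝ)+1))) := by
    intro p
    set P1 : ℝ := (p:ℝ)+1 with hP1
    have hP1pos : 0 < P1 := by rw [hP1]; positivity
    have hexp : Real.exp (K * (P1 * ‖x‖)) = (Real.exp (K * ‖x‖))^(p+1) := by
      rw [← Real.exp_nat_mul]
      congr 1
      push_cast [hP1]
      ring
    have h51 : (‖lam‖ + P1)^p ≤ P1^p * Real.exp ‖lam‖ := by
      have step : ‖lam‖ + P1 ≤ P1 * Real.exp (‖lam‖ / P1) := by
        have := Real.add_one_le_exp (‖lam‖ / P1)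
        calc ‖lam‖ + P1 = P1 * (‖lam‖ / P1 + 1) := by field_simp
          _ ≤ P1 * Real.exp (‖lam‖ / P1) := by
              exact mul_le_mul_of_nonneg_left this hP1pos.le
      calc (‖lam‖ + P1)^p ≤ (P1 * Real.exp (‖lam‖ / P1))^p := by
            apply pow_le_pow_left₀ (by positivity) step
        _ = P1^p * Real.exp (‖lam‖ / P1 * p) := by
            rw [mul_pow, ← Real.exp_nat_mul]; ring_nf
        _ ≤ P1^p * Real.exp ‖lam‖ := by
            apply mul_le_mul_of_nonneg_left _ (by positivity)
            apply Real.exp_le_exp.mpr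
            rw [div_mul_eq_mul_div, div_le_iff₀ hP1pos]
            have : (p:ℝ) ≤ P1 := by rw [hP1]; linarith
            nlinarith [norm_nonneg lam]
    have h52 := factLB p
    have hnum : A p * Real.exp (K * (P1 * ‖x‖))
        = (‖lam‖ * (‖lam‖ + P1)^p * (C * (K * ‖x‖ * Real.exp (K * ‖x‖))^(p+1))) / (p+1)! := by
      rw [hA, hexp]
      rw [mul_pow, mul_pow]
      field_simp
      ring
    rw [hnum]
    have hden : 0 < Real.sqrt P1 * (P1 / Real.exp 1)^(p+1) := by positivity
    have hstep : (‖lam‖ * (‖lam‖ + P1)^p * (C * (K * ‖x‖ * Real.exp (K * ‖x‖))^(p+1))) / (p+1)!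
        ≤ (‖lam‖ * (P1^p * Real.exp ‖lam‖) * (C * (K * ‖x‖ * Real.exp (K * ‖x‖))^(p+1)))
          / (Real.sqrt P1 * (P1 / Real.exp 1)^(p+1)) := by
      apply div_le_div₀ (by positivity) _ hden h52
      gcongr
    refine hstep.trans ?_
    have heq : (‖lam‖ * (P1^p * Real.exp ‖lam‖) * (C * (K * ‖x‖ * Real.exp (K * ‖x‖))^(p+1)))
          / (Real.sqrt P1 * (P1 / Real.exp 1)^(p+1))
        = M * ((Real.exp 1 * (K * ‖x‖ * Real.exp (K * ‖x‖)))^(p+1) / (P1 * Real.sqrt P1)) := by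
      rw [hM, div_pow, mul_pow]
      rw [pow_succ P1 p]
      have hsq : Real.sqrt P1 ≠ 0 := by positivity
      have hep : (Real.exp 1)^(p+1) ≠ 0 := by positivity
      field_simp
      ring
    rw [heq]
    have hr1 : (Real.exp 1 * (K * ‖x‖ * Real.exp (K * ‖x‖)))^(p+1) ≤ 1 := by
      apply pow_le_one₀ (by positivity)
      calc Real.exp 1 * (K * ‖x‖ * Real.exp (K * ‖x‖))
          = Real.exp 1 * K * ‖x‖ * Real.exp (K * ‖x‖) := by ring
        _ ≤ 1 := hx
    have hMnn : 0 ≤ M := by rw [hM]; positivity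
    have hcpos : (0:ℝ) < P1 * Real.sqrt P1 := by positivity
    exact mul_le_mul_of_nonneg_left ((div_le_div_iff_of_pos_right hcpos).mpr hr1) hMnn
  -- assemble summability
  have hFnormP : ∀ p : ℕ, Summable (fun n => ‖F (p, n)‖) := by
    intro p
    exact Summable.of_nonneg_of_le (fun n => norm_nonneg _) (hFG p) (hGsum p).summable
  have htsum_le : ∀ p : ℕ, ∑' n, ‖F (p, n)‖ ≤ M * (1 / (((p:ℝ)+1) * Real.sqrt ((p:ℝ)+1))) := by
    intro p
    refine le_trans (Summable.tsum_le_tsum (hFG p) (hFnormP p) (hGsum p).summable) ?_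
    rw [(hGsum p).tsum_eq]
    exact hAbound p
  have hsum2 : Summable (fun p : ℕ => ∑' n, ‖F (p, n)‖) := by
    refine Summable.of_nonneg_of_le (fun p => tsum_nonneg fun n => norm_nonneg _) htsum_le ?_
    exact (sumInvPow.mul_left M)
  have hFnorm : Summable (fun pn : ℕ × ℕ => ‖F pn‖) := by
    refine (summable_prod_of_nonneg fun pn => norm_nonneg _).mpr ⟨hFnormP, hsum2⟩
  have hFsummable : Summable F := hFnorm.of_norm
  obtain ⟨S, hS⟩ := hFsummable
  have hTsum : HasSum T S := hS.prod_fiberwise h1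
  -- regroup along antidiagonals
  have hFe : HasSum (F ∘ (Finset.HasAntidiagonal.sigmaAntidiagonalEquivProd (A := ℕ))) S :=
    (Equiv.hasSum_iff _).mpr hS
  have hU : HasSum (fun m => ∑ c ∈ Finset.HasAntidiagonal.antidiagonal m, F c) S := by
    refine HasSum.sigma hFe ?_
    intro m
    have h := hasSum_fintype (fun c : (Finset.HasAntidiagonal.antidiagonal m : Finset (ℕ × ℕ)) => F c)
    rw [Finset.sum_coe_sort] at h
    exact h
  -- identify the antidiagonal sums via Abel's identity
  have hUval : ∀ m : ℕ, (∑ c ∈ Finset.HasAntidiagonal.antidiagonal m, F c)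
      = (((m+1)! : ℕ) : ℂ)⁻¹ * (lam * x)^(m+1) * iteratedDeriv (m+1) f 0 := by
    intro m
    rw [Finset.Nat.sum_antidiagonal_eq_sum_range_succ_mk]
    have hterm : ∀ k ∈ range (m+1), F (k, m - k)
        = ((((m+1)! : ℕ) : ℂ)⁻¹ * x^(m+1) * iteratedDeriv (m+1) f 0)
          * (((m+1).choose (k+1) : ℂ) * lam * (lam - ((k:ℂ)+1))^k * (((k:ℂ)+1))^(m-k)) := by
      intro k hk
      have hk' : k ≤ m := by have := Finset.mem_range.mp hk; omega
      have hidx : (m - k) + (k + 1) = m + 1 := by omega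
      have hfac : ((m+1).choose (k+1) : ℂ) * ((k+1)! : ℂ) * (((m-k)! : ℕ) : ℂ)
          = (((m+1)! : ℕ) : ℂ) := by
        have hn : (m+1).choose (k+1) * (k+1)! * (m-k)! = (m+1)! := by
          have h0 := Nat.choose_mul_factorial_mul_factorial (show k+1 ≤ m+1 by omega)
          rw [show m+1-(k+1) = m-k by omega] at h0
          exact h0
        exact_mod_cast hn
      have hxpow : x^(k+1) * x^(m-k) = x^(m+1) := by
        rw [← pow_add]; congr 1; omega
      simp only [hF, hidx]
      have hf1 : ((k+1)! : ℂ) ≠ 0 := by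
        exact_mod_cast Nat.factorial_ne_zero (k+1)
      have hf2 : (((m-k)! : ℕ) : ℂ) ≠ 0 := by
        exact_mod_cast Nat.factorial_ne_zero (m-k)
      have hf3 : (((m+1)! : ℕ) : ℂ) ≠ 0 := by
        exact_mod_cast Nat.factorial_ne_zero (m+1)
      rw [mul_pow]
      field_simp
      rw [← hxpow]
      linear_combination (-(lam * (lam - ((k:ℂ)+1))^k * x^(k+1) * x^(m-k)
        * iteratedDeriv (m+1) f 0)) * hfac
    rw [Finset.sum_congr rfl hterm, ← Finset.mul_sum, abelEval m lam]
    rw [mul_pow]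
    ring
  have hV : HasSum (fun m : ℕ => (((m+1)! : ℕ) : ℂ)⁻¹ * (lam * x)^(m+1) * iteratedDeriv (m+1) f 0)
      (f (lam * x) - f 0) := by
    have h := taylorShift hf 0 (lam * x)
    simp only [Nat.add_zero, iteratedDeriv_zero] at h
    have h2 := (hasSum_nat_add_iff' (f := fun n : ℕ => ((n ! : ℂ))⁻¹ * (lam*x)^n * iteratedDeriv n f 0) 1).mpr h
    simp only [Finset.range_one, Finset.sum_singleton, Nat.factorial_zero, Nat.cast_one, inv_one,
      pow_zero, one_mul, mul_one, iteratedDeriv_zero] at h2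
    exact h2
  have hSval : S = f (lam * x) - f 0 := by
    have hUeq : (fun m : ℕ => ∑ c ∈ Finset.HasAntidiagonal.antidiagonal m, F c)
        = fun m : ℕ => (((m+1)! : ℕ) : ℂ)⁻¹ * (lam * x)^(m+1) * iteratedDeriv (m+1) f 0 :=
      funext hUval
    rw [hUeq] at hU
    exact hU.unique hV
  constructor
  · refine Summable.of_nonneg_of_le (fun p => norm_nonneg _) (fun p => ?_) hsum2
    have hle : ‖T p‖ ≤ ∑' n, ‖F (p, n)‖ := by
      rw [← (h1 p).tsum_eq]
      exact norm_tsum_le_tsum_norm (hFnormP p)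
    simpa [hT] using hle
  · have hfin := hTsum
    rw [hSval] at hfin
    simpa [hT] using hfin
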